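/- arXiv:2502.09221 — 9 statements merged into one kernel-verified Lean document; each statement's English description precedes it below -/
import Mathlib

section
/- Every trelational-minimal model of an EASP program Π is also a tfunctional-minimal model of Π. -/
attribute [local instance] Classical.propDecidable

namespace EASP

/-- Valuations over a countable set of atoms (atoms = ℕ). -/
abbrev Val := Set ℕ

/-- EASP literals: objective atoms `obj p`, and subjective literals `K p`, `K̂ p`. -/
inductive Lit : Type where
  | obj : ℕ → Lit
  | k : ℕ → Lit
  | khat : ℕ → Lit

/-- Body conjuncts: a literal, a `not`-negated literal, or the constants ⊤ / ⊥. -/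
inductive BLit : Type where
  | pos : Lit → BLit
  | neg : Lit → BLit
  | top : BLit
  | bot : BLit

/-- An EASP rule: head is a disjunction of literals (⊥ if empty),
body is a conjunction of body conjuncts. -/
structure Rule : Type where
  head : List Lit
  body : List BLit

/-- An EASP program: a finite collection of rules. -/
abbrev Program := List Rule

/-- Pointed S5 satisfaction of a literal, where the collection of worlds is given
as an indexed family (multiset view): `K p` iff `p` is in every member of the family,
`K̂ p` iff `p` is in some member. -/
def famSatLit {ι : Type} (W : ι → Val) (T : Val) : Lit → Prop
  | .obj p => p ∈ T
  | .k p => ∀ i, p ∈ W i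
  | .khat p => ∃ i, p ∈ W i

def famSatB {ι : Type} (W : ι → Val) (T : Val) : BLit → Prop
  | .pos l => famSatLit W T l
  | .neg l => ¬ famSatLit W T l
  | .top => True
  | .bot => False

def famSatRule {ι : Type} (W : ι → Val) (T : Val) (r : Rule) : Prop :=
  (∀ b ∈ r.body, famSatB W T b) → ∃ l ∈ r.head, famSatLit W T l

def famSatProg {ι : Type} (W : ι → Val) (T : Val) (P : Program) : Prop :=
  ∀ r ∈ P, famSatRule W T r

/-- Pointed S5 satisfaction of a literal, set-based collection of worlds. -/
def setSatLit (M : Set Val) (T : Val) : Lit → Prop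
  | .obj p => p ∈ T
  | .k p => ∀ T' ∈ M, p ∈ T'
  | .khat p => ∃ T' ∈ M, p ∈ T'

def setSatB (M : Set Val) (T : Val) : BLit → Prop
  | .pos l => setSatLit M T l
  | .neg l => ¬ setSatLit M T l
  | .top => True
  | .bot => False

def setSatRule (M : Set Val) (T : Val) (r : Rule) : Prop :=
  (∀ b ∈ r.body, setSatB M T b) → ∃ l ∈ r.head, setSatLit M T l

def setSatProg (M : Set Val) (T : Val) (P : Program) : Prop :=
  ∀ r ∈ P, setSatRule M T r

/-- Reduct of a body conjunct w.r.t. the pointed S5-model `(M, T)`: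
`not λ` becomes ⊥ if `(M,T) ⊨ λ` and ⊤ otherwise; other conjuncts are unchanged. -/
noncomputable def reductB (M : Set Val) (T : Val) : BLit → BLit
  | .pos l => .pos l
  | .neg l => if setSatLit M T l then .bot else .top
  | .top => .top
  | .bot => .bot

/-- The reduct `Π^⟨M,T⟩` of an EASP program w.r.t. the pointed S5-model `(M, T)`. -/
noncomputable def reduct (M : Set Val) (T : Val) (P : Program) : Program :=
  P.map (fun r => ⟨r.head, r.body.map (reductB M T)⟩)

/-- `(M,T) ⊨*_f P` : `(M,T)` satisfies `P` and no functional weakening of `M` at `T`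
(a map `h` with `h T ⊊ T` and `h T' = T'` for `T' ∈ M`, `T' ≠ T`) satisfies `P`
at the point `h T` in the model `h '' M`. -/
def satStarF (M : Set Val) (T : Val) (P : Program) : Prop :=
  setSatProg M T P ∧
    ∀ h : Val → Val, h T ⊂ T → (∀ T' ∈ M, T' ≠ T → h T' = T') →
      ¬ setSatProg (h '' M) (h T) P

/-- `(M,T) ⊨*_r P` : `(M,T)` satisfies `P` and for every relational weakening
`S` of `M` at `T` (a nonempty set of subsets of `T` containing a strict subset of `T`),
some designated point `H ∈ S` refutes `P` in the model `(M \ {T}) ∪ S`. -/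
def satStarR (M : Set Val) (T : Val) (P : Program) : Prop :=
  setSatProg M T P ∧
    ∀ S : Set Val, S.Nonempty → (∀ H ∈ S, H ⊆ T) → (∃ H ∈ S, H ⊂ T) →
      ∃ H ∈ S, ¬ setSatProg ((M \ {T}) ∪ S) H P

/-- `M` is a tfunctional-minimal model of `P`. -/
def tfunMinimal (M : Set Val) (P : Program) : Prop :=
  M.Nonempty ∧ ∀ T ∈ M, satStarF M T (reduct M T P)

/-- `M` is a trelational-minimal model of `P`. -/
def trelMinimal (M : Set Val) (P : Program) : Prop :=
  M.Nonempty ∧ ∀ T ∈ M, satStarR M T (reduct M T P)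

/-- every trelational-minimal model is a tfunctional-minimal model. -/
theorem stmt2 (P : Program) (M : Set Val) :
    trelMinimal M P → tfunMinimal M P := by
  rintro ⟨hne, hrel⟩
  refine ⟨hne, fun T hT => ?_⟩
  obtain ⟨hsat, hmin⟩ := hrel T hT
  refine ⟨hsat, fun h hsub hfix hcon => ?_⟩
  obtain ⟨H, hH, hns⟩ := hmin {h T} ⟨h T, rfl⟩
    (fun H hH => by rw [Set.mem_singleton_iff] at hH; exact hH ▸ hsub.subset)
    ⟨h T, rfl, hsub⟩
  rw [Set.mem_singleton_iff] at hH
  subst hH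
  apply hns
  have : (M \ {T}) ∪ {h T} = h '' M := by
    ext x
    constructor
    · rintro (⟨hxM, hxT⟩ | hx)
      · exact ⟨x, hxM, hfix x hxM hxT⟩
      · exact ⟨T, hT, (Set.mem_singleton_iff.mp hx).symm⟩
    · rintro ⟨T', hT', rfl⟩
      by_cases hTT : T' = T
      · subst hTT; exact Or.inr rfl
      · rw [hfix T' hT' hTT]; exact Or.inl ⟨hT', hTT⟩
  rw [this]
  exact hcon

end EASP
end

section
/- Let a, b be distinct atoms and let Φ be the EASP program consisting of the three rules: a ∨ b; a ← K b; b ← K a. Then the S5-model {{a,b}} is a tfunctional-minimal model of Φ but not a trelational-minimal model of Φ; hence the converse of the implication 'trelational-minimal implies tfunctional-minimal' fails. -/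
attribute [local instance] Classical.propDecidable

namespace EASP

/-- The program Φ = { a ∨ b ;  a ← K b ;  b ← K a }. -/
def Phi (a b : ℕ) : Program :=
  [⟨[.obj a, .obj b], []⟩,
   ⟨[.obj a], [.pos (.k b)]⟩,
   ⟨[.obj b], [.pos (.k a)]⟩]

/-- {{a,b}} is tfunctional-minimal for Φ but not trelational-minimal. -/
theorem stmt3 (a b : ℕ) (hab : a ≠ b) :
    tfunMinimal {({a, b} : Val)} (Phi a b) ∧
      ¬ trelMinimal {({a, b} : Val)} (Phi a b) := by
  have haT : a ∈ ({a, b} : Val) := Or.inl rfl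
  have hbT : b ∈ ({a, b} : Val) := Or.inr rfl
  have hred : ∀ (M : Set Val) (T : Val), reduct M T (Phi a b) = Phi a b := fun M T => rfl
  constructor
  · refine ⟨⟨{a, b}, rfl⟩, ?_⟩
    intro T hT
    rw [Set.mem_singleton_iff] at hT
    subst hT
    rw [hred]
    constructor
    · intro r hr
      simp only [Phi, List.mem_cons, List.not_mem_nil, or_false] at hr
      rcases hr with h | h | h
      · subst h; intro _; exact ⟨.obj a, by simp, haT⟩
      · subst h; intro _; exact ⟨.obj a, by simp, haT⟩
      · subst h; intro _; exact ⟨.obj b, by simp, hbT⟩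
    · intro h hsub hfix hsat
      rw [Set.image_singleton] at hsat
      have h1 := hsat (⟨[.obj a, .obj b], []⟩ : Rule) (by simp [Phi]) (by intro b hb; cases hb)
      have hr2 := hsat (⟨[.obj a], [.pos (.k b)]⟩ : Rule) (by simp [Phi])
      have hr3 := hsat (⟨[.obj b], [.pos (.k a)]⟩ : Rule) (by simp [Phi])
      have hnsub : ¬ ({a, b} : Val) ⊆ h ({a, b} : Val) := fun hc => hsub.2 hc
      rcases h1 with ⟨l, hl, hsl⟩
      have hl' : l = .obj a ∨ l = .obj b := by simpa using hl
      have key : ∀ p, setSatLit {h ({a, b} : Val)} (h ({a, b} : Val)) (.k p) ↔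
          p ∈ h ({a, b} : Val) := by
        intro p
        constructor
        · intro hk; exact hk _ rfl
        · intro hp T' hT'; rw [Set.mem_singleton_iff] at hT'; subst hT'; exact hp
      rcases hl' with hl' | hl' <;> subst hl'
      · -- a ∈ h T; derive b ∈ h T via rule 3
        have hka : setSatB {h ({a, b} : Val)} (h ({a, b} : Val)) (.pos (.k a)) :=
          (key a).2 hsl
        obtain ⟨l', hl', hsl'⟩ := hr3 (by intro c hc; simp at hc; subst hc; exact hka)
        simp at hl'; subst hl'
        exact hnsub (by intro x hx; rcases hx with hx | hx <;> subst hx <;> assumption)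
      · have hkb : setSatB {h ({a, b} : Val)} (h ({a, b} : Val)) (.pos (.k b)) :=
          (key b).2 hsl
        obtain ⟨l', hl', hsl'⟩ := hr2 (by intro c hc; simp at hc; subst hc; exact hkb)
        simp at hl'; subst hl'
        exact hnsub (by intro x hx; rcases hx with hx | hx <;> subst hx <;> assumption)
  · rintro ⟨-, hmin⟩
    obtain ⟨-, hw⟩ := hmin {a, b} rfl
    rw [hred] at hw
    have hsubA : ({a} : Val) ⊂ ({a, b} : Val) := by
      constructor
      · intro x hx; rw [Set.mem_singleton_iff] at hx; subst hx; exact haT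
      · intro hc
        have := hc hbT
        rw [Set.mem_singleton_iff] at this
        exact hab this.symm
    obtain ⟨H, hH, hns⟩ := hw {{a}, {b}} ⟨{a}, Or.inl rfl⟩
      (by rintro H (hH | hH) <;> subst hH
          · exact hsubA.1
          · intro x hx; rw [Set.mem_singleton_iff] at hx; subst hx; exact hbT)
      ⟨{a}, Or.inl rfl, hsubA⟩
    apply hns
    have hmodel : (({({a, b} : Val)} : Set Val) \ {({a, b} : Val)}) ∪ {{a}, {b}}
        = ({{a}, {b}} : Set Val) := by
      rw [Set.diff_self, Set.empty_union]
    rw [hmodel]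
    intro r hr
    have hnoka : ¬ setSatLit {{a}, {b}} H (.k a) := by
      intro hk
      have := hk {b} (Or.inr rfl)
      rw [Set.mem_singleton_iff] at this
      exact hab this
    have hnokb : ¬ setSatLit {{a}, {b}} H (.k b) := by
      intro hk
      have := hk {a} (Or.inl rfl)
      rw [Set.mem_singleton_iff] at this
      exact hab this.symm
    simp only [Phi, List.mem_cons, List.not_mem_nil, or_false] at hr
    rcases hr with h | h | h
    · subst h
      intro _
      rcases hH with hH | hH <;> subst hH
      · exact ⟨.obj a, by simp, rfl⟩
      · exact ⟨.obj b, by simp, rfl⟩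
    · subst h
      intro hbody
      exact absurd (hbody (.pos (.k b)) (by simp)) hnokb
    · subst h
      intro hbody
      exact absurd (hbody (.pos (.k a)) (by simp)) hnoka

end EASP
end

section
/- Let Π be an EASP program and 𝒯 a nonempty collection of valuations. Then 𝒯 is a functional epistemic equilibrium model (EEM) of the translation Π* if and only if: (i) (𝒯,T) ⊨ Π^⟨𝒯,T⟩ for every T ∈ 𝒯, and (ii) for every subset function h on 𝒯 with h ≠ id there exists T′ ∈ 𝒯 such that the indexed family (h(T))_{T∈𝒯}, viewed as an S5-model (treated as a multiset, so K p holds iff p ∈ h(T) for all T ∈ 𝒯 and K̂ p iff p ∈ h(T) for some T ∈ 𝒯), does not satisfy the reduct Π^⟨𝒯,T′⟩ at the point h(T′). -/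
attribute [local instance] Classical.propDecidable

namespace EASP

/-- EHT formulas. -/
inductive Fml : Type where
  | atom : ℕ → Fml
  | bot : Fml
  | and : Fml → Fml → Fml
  | or : Fml → Fml → Fml
  | imp : Fml → Fml → Fml
  | k : Fml → Fml
  | khat : Fml → Fml

/-- EHT negation `¬φ := φ → ⊥`. -/
def Fml.neg (φ : Fml) : Fml := .imp φ .bot

/-- EHT truth `⊤ := ¬⊥`. -/
def Fml.top : Fml := Fml.neg .bot

/-- Satisfaction in a functional EHT-model `⟨M, h⟩` at a point `T`. -/
def ehtSat (M : Set Val) : (Val → Val) → Val → Fml → Prop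
  | h, T, .atom p => p ∈ h T
  | _, _, .bot => False
  | h, T, .and φ ψ => ehtSat M h T φ ∧ ehtSat M h T ψ
  | h, T, .or φ ψ => ehtSat M h T φ ∨ ehtSat M h T ψ
  | h, T, .imp φ ψ =>
      (ehtSat M h T φ → ehtSat M h T ψ) ∧ (ehtSat M id T φ → ehtSat M id T ψ)
  | h, _, .k φ => ∀ T' ∈ M, ehtSat M h T' φ
  | h, _, .khat φ => ∃ T' ∈ M, ehtSat M h T' φ

/-- Translation of an EASP literal into an EHT formula. -/
def Lit.toFml : Lit → Fml
  | .obj p => .atom p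
  | .k p => .k (.atom p)
  | .khat p => .khat (.atom p)

/-- Translation of a body conjunct into an EHT formula (`not` becomes EHT `¬`). -/
def BLit.toFml : BLit → Fml
  | .pos l => l.toFml
  | .neg l => Fml.neg l.toFml
  | .top => Fml.top
  | .bot => .bot

/-- Translation of a rule into the EHT implication body → head. -/
def Rule.toFml (r : Rule) : Fml :=
  .imp (r.body.foldr (fun b acc => .and b.toFml acc) Fml.top)
       (r.head.foldr (fun l acc => .or l.toFml acc) .bot)

/-- The translation `Π*` of an EASP program: the conjunction of its rules. -/
def translate (P : Program) : Fml :=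
  P.foldr (fun r acc => .and r.toFml acc) Fml.top

/-- `M` is a functional epistemic equilibrium model (EEM) of the EHT formula `φ`. -/
def funEEM (M : Set Val) (φ : Fml) : Prop :=
  (∀ T ∈ M, ehtSat M id T φ) ∧
    ∀ h : Val → Val, (∀ T ∈ M, h T ⊆ T) → (∃ T ∈ M, h T ≠ T) →
      ∃ T ∈ M, ¬ ehtSat M h T φ

section Aux

variable (M : Set Val)

lemma ehtSat_top (h : Val → Val) (T : Val) : ehtSat M h T Fml.top := by
  simp [Fml.top, Fml.neg, ehtSat]

lemma lit_fam (h : Val → Val) (T : Val) (l : Lit) :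
    ehtSat M h T l.toFml ↔ famSatLit (fun x : M => h x.1) (h T) l := by
  cases l with
  | obj p => simp [Lit.toFml, ehtSat, famSatLit]
  | k p =>
    simp only [Lit.toFml, ehtSat, famSatLit]
    exact ⟨fun H i => H i.1 i.2, fun H T' hT' => H ⟨T', hT'⟩⟩
  | khat p =>
    simp only [Lit.toFml, ehtSat, famSatLit]
    constructor
    · rintro ⟨T', hT', hp⟩; exact ⟨⟨T', hT'⟩, hp⟩
    · rintro ⟨i, hp⟩; exact ⟨i.1, i.2, hp⟩

lemma lit_id (T : Val) (l : Lit) :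
    ehtSat M id T l.toFml ↔ setSatLit M T l := by
  cases l <;> simp [Lit.toFml, ehtSat, setSatLit]

lemma lit_mono (h : Val → Val) (hh : ∀ T ∈ M, h T ⊆ T) (T : Val) (hT : T ∈ M) (l : Lit)
    (H : famSatLit (fun x : M => h x.1) (h T) l) : setSatLit M T l := by
  cases l with
  | obj p => exact hh T hT H
  | k p => exact fun T' hT' => hh T' hT' (H ⟨T', hT'⟩)
  | khat p => obtain ⟨i, hp⟩ := H; exact ⟨i.1, i.2, hh i.1 i.2 hp⟩

lemma blit (h : Val → Val) (hh : ∀ T ∈ M, h T ⊆ T) (T : Val) (hT : T ∈ M) (b : BLit) :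
    ehtSat M h T b.toFml ↔ famSatB (fun x : M => h x.1) (h T) (reductB M T b) := by
  cases b with
  | pos l =>
    simpa [BLit.toFml, reductB, famSatB] using lit_fam M h T l
  | neg l =>
    simp only [BLit.toFml, Fml.neg, ehtSat, reductB, lit_fam M h T l, lit_id M T l]
    by_cases hs : setSatLit M T l
    · simp [hs, famSatB]
    · simp only [hs, if_false, famSatB, iff_true, not_false_iff, and_true]
      exact ⟨fun H => hs (lit_mono M h hh T hT l H), id⟩
  | top =>
    simp only [BLit.toFml, reductB, famSatB, iff_true]
    exact ehtSat_top M h T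
  | bot => simp [BLit.toFml, reductB, famSatB, ehtSat]

lemma blit_id (T : Val) (b : BLit) :
    ehtSat M id T b.toFml ↔ setSatB M T b := by
  cases b with
  | pos l => simpa [BLit.toFml, setSatB] using lit_id M T l
  | neg l =>
    simp only [BLit.toFml, Fml.neg, ehtSat, setSatB, lit_id M T l]
    tauto
  | top =>
    simp only [BLit.toFml, setSatB, iff_true]
    exact ehtSat_top M id T
  | bot => simp [BLit.toFml, setSatB, ehtSat]

lemma setSat_reductB (T : Val) (b : BLit) :
    setSatB M T (reductB M T b) ↔ setSatB M T b := by
  cases b with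
  | pos l => rfl
  | neg l =>
    simp only [reductB]
    by_cases hs : setSatLit M T l <;> simp [hs, setSatB]
  | top => rfl
  | bot => rfl

lemma sat_body (h : Val → Val) (T : Val) (L : List BLit) :
    ehtSat M h T (L.foldr (fun b acc => .and b.toFml acc) Fml.top) ↔
      ∀ b ∈ L, ehtSat M h T b.toFml := by
  induction L with
  | nil => simp [ehtSat_top M h T]
  | cons a L ih => simp [ehtSat, ih]

lemma sat_head (h : Val → Val) (T : Val) (L : List Lit) :
    ehtSat M h T (L.foldr (fun l acc => .or l.toFml acc) .bot) ↔
      ∃ l ∈ L, ehtSat M h T l.toFml := by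
  induction L with
  | nil => simp [ehtSat]
  | cons a L ih => simp [ehtSat, ih]

lemma sat_translate (h : Val → Val) (T : Val) (P : Program) :
    ehtSat M h T (translate P) ↔ ∀ r ∈ P, ehtSat M h T r.toFml := by
  induction P with
  | nil => simp [translate, ehtSat_top M h T]
  | cons a P ih =>
    show ehtSat M h T (.and a.toFml (translate P)) ↔ _
    rw [show ehtSat M h T (.and a.toFml (translate P)) ↔
      (ehtSat M h T a.toFml ∧ ehtSat M h T (translate P)) from Iff.rfl, ih,
      List.forall_mem_cons]

lemma rule_char (h : Val → Val) (hh : ∀ T ∈ M, h T ⊆ T) (T : Val) (hT : T ∈ M) (r : Rule) :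
    ehtSat M h T r.toFml ↔
      (famSatRule (fun x : M => h x.1) (h T) ⟨r.head, r.body.map (reductB M T)⟩ ∧
       setSatRule M T r) := by
  simp only [Rule.toFml, ehtSat, sat_body, sat_head, famSatRule, setSatRule,
    List.mem_map, forall_exists_index, and_imp]
  constructor
  · rintro ⟨H1, H2⟩
    refine ⟨fun Hb => ?_, fun Hb => ?_⟩
    · obtain ⟨l, hl, hsat⟩ := H1 (fun b hb => (blit M h hh T hT b).mpr (Hb _ b hb rfl))
      exact ⟨l, hl, (lit_fam M h T l).mp hsat⟩
    · obtain ⟨l, hl, hsat⟩ := H2 (fun b hb => (blit_id M T b).mpr (Hb b hb))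
      exact ⟨l, hl, (lit_id M T l).mp hsat⟩
  · rintro ⟨H1, H2⟩
    refine ⟨fun Hb => ?_, fun Hb => ?_⟩
    · obtain ⟨l, hl, hsat⟩ := H1 (fun b' b hb hb' => hb' ▸ (blit M h hh T hT b).mp (Hb b hb))
      exact ⟨l, hl, (lit_fam M h T l).mpr hsat⟩
    · obtain ⟨l, hl, hsat⟩ := H2 (fun b hb => (blit_id M T b).mp (Hb b hb))
      exact ⟨l, hl, (lit_id M T l).mpr hsat⟩

lemma setSat_reductRule (T : Val) (r : Rule) :
    setSatRule M T ⟨r.head, r.body.map (reductB M T)⟩ ↔ setSatRule M T r := by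
  simp only [setSatRule, List.mem_map, forall_exists_index, and_imp]
  constructor
  · intro H Hb
    exact H (fun b' b hb hb' => hb' ▸ (setSat_reductB M T b).mpr (Hb b hb))
  · intro H Hb
    exact H (fun b hb => (setSat_reductB M T b).mp (Hb _ b hb rfl))

lemma prog_char (h : Val → Val) (hh : ∀ T ∈ M, h T ⊆ T) (T : Val) (hT : T ∈ M)
    (P : Program) :
    ehtSat M h T (translate P) ↔
      (famSatProg (fun x : M => h x.1) (h T) (reduct M T P) ∧
       setSatProg M T (reduct M T P)) := by
  simp only [sat_translate, famSatProg, setSatProg, reduct, List.mem_map,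
    forall_exists_index, and_imp]
  constructor
  · intro H
    refine ⟨fun r' r hr hr' => ?_, fun r' r hr hr' => ?_⟩
    · exact hr' ▸ ((rule_char M h hh T hT r).mp (H r hr)).1
    · exact hr' ▸ (setSat_reductRule M T r).mpr ((rule_char M h hh T hT r).mp (H r hr)).2
  · rintro ⟨H1, H2⟩ r hr
    exact (rule_char M h hh T hT r).mpr
      ⟨H1 _ r hr rfl, (setSat_reductRule M T r).mp (H2 _ r hr rfl)⟩

lemma fam_id_lit (T : Val) (l : Lit) :
    famSatLit (fun x : M => x.1) T l ↔ setSatLit M T l := by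
  cases l with
  | obj p => simp [famSatLit, setSatLit]
  | k p =>
    simp only [famSatLit, setSatLit]
    exact ⟨fun H T' hT' => H ⟨T', hT'⟩, fun H i => H i.1 i.2⟩
  | khat p =>
    simp only [famSatLit, setSatLit]
    constructor
    · rintro ⟨i, hp⟩; exact ⟨i.1, i.2, hp⟩
    · rintro ⟨T', hT', hp⟩; exact ⟨⟨T', hT'⟩, hp⟩

lemma fam_id_blit (T : Val) (b : BLit) :
    famSatB (fun x : M => x.1) T b ↔ setSatB M T b := by
  cases b with
  | pos l => exact fam_id_lit M T l
  | neg l => exact not_congr (fam_id_lit M T l)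
  | top => rfl
  | bot => rfl

lemma fam_id_prog (T : Val) (P : Program) :
    famSatProg (fun x : M => x.1) T P ↔ setSatProg M T P := by
  unfold famSatProg setSatProg famSatRule setSatRule
  refine forall₂_congr fun r _ => imp_congr ?_ ?_
  · exact forall₂_congr fun b _ => fam_id_blit M T b
  · exact exists_congr fun l => and_congr_right fun _ => fam_id_lit M T l

lemma prog_id (T : Val) (hT : T ∈ M) (P : Program) :
    ehtSat M id T (translate P) ↔ setSatProg M T (reduct M T P) := by
  rw [prog_char M id (fun _ _ => le_refl _) T hT P]
  simp only [id_eq]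
  rw [fam_id_prog M T (reduct M T P)]
  exact and_self_iff

end Aux

/-- functional EEMs of `Π*` characterised via reducts in EASP. -/
theorem stmt4 (P : Program) (M : Set Val) (hne : M.Nonempty) :
    funEEM M (translate P) ↔
      ((∀ T ∈ M, setSatProg M T (reduct M T P)) ∧
        ∀ h : Val → Val, (∀ T ∈ M, h T ⊆ T) → (∃ T ∈ M, h T ≠ T) →
          ∃ T' ∈ M, ¬ famSatProg (fun x : M => h x.1) (h T') (reduct M T' P)) := by
  constructor
  · rintro ⟨h1, h2⟩
    refine ⟨fun T hT => (prog_id M T hT P).mp (h1 T hT), fun h hsub hne' => ?_⟩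
    obtain ⟨T', hT', hns⟩ := h2 h hsub hne'
    refine ⟨T', hT', fun hf => hns ?_⟩
    exact (prog_char M h hsub T' hT' P).mpr ⟨hf,
      (prog_id M T' hT' P).mp (h1 T' hT')⟩
  · rintro ⟨h1, h2⟩
    refine ⟨fun T hT => (prog_id M T hT P).mpr (h1 T hT), fun h hsub hne' => ?_⟩
    obtain ⟨T', hT', hnf⟩ := h2 h hsub hne'
    exact ⟨T', hT', fun hs => hnf ((prog_char M h hsub T' hT' P).mp hs).1⟩

end EASP
end

section
/- Let Π be an EASP program and 𝒯 = {T_1, …, T_n} a nonempty finite collection of valuations. Then 𝒯 is a tfunctional-minimal model of Π if and only if: (i) the total EHT-model ⟨𝒯,id⟩ satisfies Π* at every point T_i, and (ii) for every j and every subset function h on 𝒯 with h(T_i) = T_i for all i ≠ j and h(T_j) ⊊ T_j, the functional EHT-model ⟨𝒯,h⟩ (explicitly {(h(T_i),T_i) : i = 1,…,n}) does not satisfy Π* at the point (h(T_j),T_j). -/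
attribute [local instance] Classical.propDecidable

namespace EASP

lemma ehtSat_lit (M : Set Val) (h : Val → Val) (T : Val) (l : Lit) :
    ehtSat M h T l.toFml ↔ setSatLit (h '' M) (h T) l := by
  cases l <;> simp [Lit.toFml, ehtSat, setSatLit]

lemma ehtSat_lit_id (M : Set Val) (T : Val) (l : Lit) :
    ehtSat M id T l.toFml ↔ setSatLit M T l := by
  simpa using ehtSat_lit M id T l

lemma lit_persist (M : Set Val) (h : Val → Val) (T : Val)
    (hsub : ∀ T' ∈ M, h T' ⊆ T') (hTM : T ∈ M) (l : Lit) :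
    ehtSat M h T l.toFml → ehtSat M id T l.toFml := by
  rw [ehtSat_lit, ehtSat_lit_id]
  cases l with
  | obj p => exact fun hp => hsub T hTM hp
  | k p =>
    intro hk T' hT'
    exact hsub T' hT' (hk (h T') ⟨T', hT', rfl⟩)
  | khat p =>
    rintro ⟨S, ⟨T', hT', rfl⟩, hp⟩
    exact ⟨T', hT', hsub T' hT' hp⟩

lemma ehtSat_blit (M : Set Val) (h : Val → Val) (T : Val)
    (hsub : ∀ T' ∈ M, h T' ⊆ T') (hTM : T ∈ M) (b : BLit) :
    ehtSat M h T b.toFml ↔ setSatB (h '' M) (h T) (reductB M T b) := by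
  cases b with
  | pos l => simpa [BLit.toFml, reductB, setSatB] using ehtSat_lit M h T l
  | neg l =>
    simp only [BLit.toFml, Fml.neg, ehtSat, reductB]
    by_cases hl : setSatLit M T l
    · simp [setSatB, hl, (ehtSat_lit_id M T l).mpr hl]
    · simp only [setSatB, hl, if_neg hl]
      constructor
      · intro _; trivial
      · intro _
        refine ⟨fun hh => ?_, fun hi => hl ((ehtSat_lit_id M T l).mp hi)⟩
        exact hl ((ehtSat_lit_id M T l).mp (lit_persist M h T hsub hTM l hh))
  | top => simp [BLit.toFml, Fml.top, Fml.neg, ehtSat, reductB, setSatB]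
  | bot => simp [BLit.toFml, ehtSat, reductB, setSatB]

lemma ehtSat_fold_and (M : Set Val) (h : Val → Val) (T : Val) (L : List BLit) :
    ehtSat M h T (L.foldr (fun b acc => .and b.toFml acc) Fml.top) ↔
      ∀ b ∈ L, ehtSat M h T b.toFml := by
  induction L with
  | nil => simp [Fml.top, Fml.neg, ehtSat]
  | cons b L ih => simp [ehtSat, ih]

lemma ehtSat_fold_or (M : Set Val) (h : Val → Val) (T : Val) (L : List Lit) :
    ehtSat M h T (L.foldr (fun l acc => .or l.toFml acc) .bot) ↔
      ∃ l ∈ L, ehtSat M h T l.toFml := by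
  induction L with
  | nil => simp [ehtSat]
  | cons l L ih => simp [ehtSat, ih]

lemma ehtSat_translate (M : Set Val) (h : Val → Val) (T : Val) (P : Program) :
    ehtSat M h T (translate P) ↔ ∀ r ∈ P, ehtSat M h T r.toFml := by
  induction P with
  | nil => simp [translate, Fml.top, Fml.neg, ehtSat]
  | cons r P ih =>
    have e : ehtSat M h T (translate (r :: P)) ↔
        ehtSat M h T r.toFml ∧ ehtSat M h T (translate P) := Iff.rfl
    rw [e, ih]; simp

lemma setSatRule_reduct (M' : Set Val) (S : Val) (M : Set Val) (T : Val) (r : Rule) :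
    setSatRule M' S ⟨r.head, r.body.map (reductB M T)⟩ ↔
      ((∀ b ∈ r.body, setSatB M' S (reductB M T b)) → ∃ l ∈ r.head, setSatLit M' S l) := by
  simp [setSatRule]

lemma ehtSat_rule (M : Set Val) (h : Val → Val) (T : Val)
    (hsub : ∀ T' ∈ M, h T' ⊆ T') (hTM : T ∈ M) (r : Rule) :
    ehtSat M h T r.toFml ↔
      (setSatRule (h '' M) (h T) ⟨r.head, r.body.map (reductB M T)⟩ ∧
        setSatRule M T ⟨r.head, r.body.map (reductB M T)⟩) := by
  have hid : ∀ T' ∈ M, id T' ⊆ T' := fun _ _ => le_refl _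
  rw [Rule.toFml]
  show ((ehtSat M h T _ → ehtSat M h T _) ∧ (ehtSat M id T _ → ehtSat M id T _)) ↔ _
  rw [ehtSat_fold_and, ehtSat_fold_and, ehtSat_fold_or, ehtSat_fold_or,
    setSatRule_reduct, setSatRule_reduct]
  constructor
  · rintro ⟨h1, h2⟩
    constructor
    · intro hb
      obtain ⟨l, hl, hsat⟩ := h1 (fun b hb' =>
        (ehtSat_blit M h T hsub hTM b).mpr (hb _ hb'))
      exact ⟨l, hl, (ehtSat_lit M h T l).mp hsat⟩
    · intro hb
      obtain ⟨l, hl, hsat⟩ := h2 (fun b hb' => by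
        have := (ehtSat_blit M id T hid hTM b).mpr (by simpa using hb _ hb')
        exact this)
      exact ⟨l, hl, (ehtSat_lit_id M T l).mp hsat⟩
  · rintro ⟨h1, h2⟩
    constructor
    · intro hb
      obtain ⟨l, hl, hsat⟩ := h1 (fun b hb' =>
        (ehtSat_blit M h T hsub hTM b).mp (hb _ hb'))
      exact ⟨l, hl, (ehtSat_lit M h T l).mpr hsat⟩
    · intro hb
      obtain ⟨l, hl, hsat⟩ := h2 (fun b hb' => by
        have := (ehtSat_blit M id T hid hTM b).mp (hb _ hb')
        simpa using this)
      exact ⟨l, hl, (ehtSat_lit_id M T l).mpr hsat⟩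

lemma key (M : Set Val) (h : Val → Val) (T : Val)
    (hsub : ∀ T' ∈ M, h T' ⊆ T') (hTM : T ∈ M) (P : Program) :
    ehtSat M h T (translate P) ↔
      (setSatProg (h '' M) (h T) (reduct M T P) ∧ setSatProg M T (reduct M T P)) := by
  rw [ehtSat_translate]
  constructor
  · intro H
    constructor
    · rintro r' hr'
      rw [reduct, List.mem_map] at hr'
      obtain ⟨r, hr, rfl⟩ := hr'
      exact ((ehtSat_rule M h T hsub hTM r).mp (H r hr)).1
    · rintro r' hr'
      rw [reduct, List.mem_map] at hr'
      obtain ⟨r, hr, rfl⟩ := hr'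
      exact ((ehtSat_rule M h T hsub hTM r).mp (H r hr)).2
  · rintro ⟨H1, H2⟩ r hr
    refine (ehtSat_rule M h T hsub hTM r).mpr ⟨?_, ?_⟩
    · exact H1 _ (by rw [reduct, List.mem_map]; exact ⟨r, hr, rfl⟩)
    · exact H2 _ (by rw [reduct, List.mem_map]; exact ⟨r, hr, rfl⟩)

lemma key_id (M : Set Val) (T : Val) (hTM : T ∈ M) (P : Program) :
    ehtSat M id T (translate P) ↔ setSatProg M T (reduct M T P) := by
  have := key M id T (fun _ _ => le_refl _) hTM P
  simpa using this

/-- tfunctional-minimal models of `Π` characterised in EHT. -/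
theorem stmt6 (P : Program) (M : Set Val) (hfin : M.Finite) (hne : M.Nonempty) :
    tfunMinimal M P ↔
      ((∀ T ∈ M, ehtSat M id T (translate P)) ∧
        ∀ T ∈ M, ∀ h : Val → Val,
          (∀ T' ∈ M, T' ≠ T → h T' = T') → h T ⊂ T →
            ¬ ehtSat M h T (translate P)) := by
  have hsubof : ∀ (T : Val), T ∈ M → ∀ h : Val → Val,
      (∀ T' ∈ M, T' ≠ T → h T' = T') → h T ⊂ T → ∀ T' ∈ M, h T' ⊆ T' := by
    intro T hT h heq hlt T' hT'
    by_cases hTT : T' = T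
    · subst hTT; exact hlt.subset
    · rw [heq T' hT' hTT]
  constructor
  · rintro ⟨-, hmin⟩
    constructor
    · intro T hT
      exact (key_id M T hT P).mpr (hmin T hT).1
    · intro T hT h heq hlt
      rw [key M h T (hsubof T hT h heq hlt) hT P]
      rintro ⟨H1, _⟩
      exact (hmin T hT).2 h hlt heq H1
  · rintro ⟨h1, h2⟩
    refine ⟨hne, fun T hT => ⟨(key_id M T hT P).mp (h1 T hT), ?_⟩⟩
    intro h hlt heq Hc
    exact h2 T hT h heq hlt ((key M h T (hsubof T hT h heq hlt) hT P).mpr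
      ⟨Hc, (key_id M T hT P).mp (h1 T hT)⟩)

end EASP
end

section
/- For every EHT formula φ, the formulas ¬K¬φ, ¬¬K̂φ, and K̂¬¬φ are pairwise EHT-equivalent: for every functional EHT-model ⟨𝒯,h⟩ and every T ∈ 𝒯, ⟨𝒯,h⟩,T ⊨ ¬K¬φ iff ⟨𝒯,h⟩,T ⊨ ¬¬K̂φ iff ⟨𝒯,h⟩,T ⊨ K̂¬¬φ. -/
attribute [local instance] Classical.propDecidable

namespace EASP

/-- Persistence: satisfaction at `h` implies satisfaction at `id`. -/
lemma persistence (M : Set Val) (h : Val → Val) (hsub : ∀ T ∈ M, h T ⊆ T) :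
    ∀ (φ : Fml) (T : Val), T ∈ M → ehtSat M h T φ → ehtSat M id T φ := by
  intro φ
  induction φ with
  | atom p => intro T hT hp; exact hsub T hT hp
  | bot => intro T _ hp; exact hp
  | and φ ψ ihφ ihψ => intro T hT hp; exact ⟨ihφ T hT hp.1, ihψ T hT hp.2⟩
  | or φ ψ ihφ ihψ =>
      intro T hT hp
      cases hp with
      | inl hp => exact Or.inl (ihφ T hT hp)
      | inr hp => exact Or.inr (ihψ T hT hp)
  | imp φ ψ ihφ ihψ => intro T hT hp; exact ⟨hp.2, hp.2⟩
  | k φ ih => intro T hT hp T' hT'; exact ih T' hT' (hp T' hT')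
  | khat φ ih =>
      intro T hT hp
      obtain ⟨T', hT', hφ⟩ := hp
      exact ⟨T', hT', ih T' hT' hφ⟩

lemma neg_iff (M : Set Val) (h : Val → Val) (hsub : ∀ T ∈ M, h T ⊆ T)
    (φ : Fml) (T : Val) (hT : T ∈ M) :
    ehtSat M h T (Fml.neg φ) ↔ ¬ ehtSat M id T φ := by
  constructor
  · intro hn hid; exact hn.2 hid
  · intro hn
    exact ⟨fun hh => (hn (persistence M h hsub φ T hT hh)).elim, fun hid => hn hid⟩

/-- ¬K¬φ, ¬¬K̂φ and K̂¬¬φ are pairwise EHT-equivalent. -/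
theorem stmt9 (φ : Fml) (M : Set Val) (hne : M.Nonempty)
    (h : Val → Val) (hsub : ∀ T ∈ M, h T ⊆ T) (T : Val) (hT : T ∈ M) :
    (ehtSat M h T (Fml.neg (.k (Fml.neg φ))) ↔
      ehtSat M h T (Fml.neg (Fml.neg (.khat φ)))) ∧
    (ehtSat M h T (Fml.neg (Fml.neg (.khat φ))) ↔
      ehtSat M h T (.khat (Fml.neg (Fml.neg φ)))) := by
  have key : ∀ ψ : Fml,
      (ehtSat M h T (Fml.neg ψ) ↔ ¬ ehtSat M id T ψ) := fun ψ => neg_iff M h hsub ψ T hT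
  have e1 : ehtSat M h T (Fml.neg (.k (Fml.neg φ))) ↔ ∃ T' ∈ M, ehtSat M id T' φ := by
    rw [key]
    constructor
    · intro hn
      by_contra hc
      push_neg at hc
      exact hn (fun T' hT' => (neg_iff M id (fun _ _ => le_refl _) φ T' hT').2 (hc T' hT'))
    · rintro ⟨T', hT', hφ⟩ hk
      exact ((neg_iff M id (fun _ _ => le_refl _) φ T' hT').1 (hk T' hT')) hφ
  have e2 : ehtSat M h T (Fml.neg (Fml.neg (.khat φ))) ↔ ∃ T' ∈ M, ehtSat M id T' φ := by
    rw [key, neg_iff M id (fun _ _ => le_refl _) _ T hT, not_not]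
    rfl
  have e3 : ehtSat M h T (.khat (Fml.neg (Fml.neg φ))) ↔ ∃ T' ∈ M, ehtSat M id T' φ := by
    constructor
    · rintro ⟨T', hT', hφ⟩
      have := (neg_iff M h hsub _ T' hT').1 hφ
      rw [neg_iff M id (fun _ _ => le_refl _) φ T' hT', not_not] at this
      exact ⟨T', hT', this⟩
    · rintro ⟨T', hT', hφ⟩
      refine ⟨T', hT', (neg_iff M h hsub _ T' hT').2 ?_⟩
      rw [neg_iff M id (fun _ _ => le_refl _) φ T' hT', not_not]
      exact hφ
  exact ⟨e1.trans e2.symm, e2.trans e3.symm⟩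


end EASP
end

section
/- Let a, b be distinct atoms and let Φ be the EASP program consisting of the three rules: a ∨ b; a ← K b; b ← K a. Then the S5-model {{a},{b}} is a trelational-minimal model of Φ (and hence also a tfunctional-minimal model of Φ). -/
attribute [local instance] Classical.propDecidable

namespace EASP

lemma emptyFail (W : Set Val) (a b : ℕ) : ¬ setSatProg W ∅ (Phi a b) := by
  intro h
  have h1 := h ⟨[.obj a, .obj b], []⟩ (by simp [Phi]) (by intro x hx; simp at hx)
  simp [setSatLit] at h1

lemma satPhi (a b : ℕ) (hab : a ≠ b) (T : Val)
    (hT : T ∈ ({({a} : Val), ({b} : Val)} : Set Val)) :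
    setSatProg {({a} : Val), ({b} : Val)} T (Phi a b) := by
  intro r hr hb
  simp [Phi] at hr
  rcases hr with h | h | h
  · subst h
    rcases hT with h | h
    · exact ⟨.obj a, by simp, by simp [setSatLit, h]⟩
    · exact ⟨.obj b, by simp, by simp [setSatLit, Set.mem_singleton_iff.mp h]⟩
  · subst h
    have := hb (.pos (.k b)) (by simp)
    have hba : b ∈ ({a} : Val) := this ({a} : Val) (by simp)
    exact absurd hba.symm hab
  · subst h
    have := hb (.pos (.k a)) (by simp)
    have hba : a ∈ ({b} : Val) := this ({b} : Val) (by simp)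
    exact absurd hba hab

lemma subSingleton {x : ℕ} {H : Val} (h : H ⊂ ({x} : Val)) : H = ∅ :=
  Set.ssubset_singleton_iff.mp h

/-- {{a},{b}} is trelational-minimal (hence tfunctional-minimal) for Φ. -/
theorem stmt11 (a b : ℕ) (hab : a ≠ b) :
    trelMinimal {({a} : Val), ({b} : Val)} (Phi a b) ∧
      tfunMinimal {({a} : Val), ({b} : Val)} (Phi a b) := by
  have hred : ∀ T : Val, reduct {({a} : Val), ({b} : Val)} T (Phi a b) = Phi a b :=
    fun T => rfl
  have hempty : ∀ T : Val, T ∈ ({({a} : Val), ({b} : Val)} : Set Val) →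
      ∀ H : Val, H ⊂ T → H = ∅ := by
    intro T hT H hH
    rcases hT with h | h
    · exact subSingleton (h ▸ hH)
    · exact subSingleton ((Set.mem_singleton_iff.mp h) ▸ hH)
  constructor
  · refine ⟨⟨{a}, by simp⟩, fun T hT => ?_⟩
    rw [hred]
    refine ⟨satPhi a b hab T hT, fun S hSne hSsub ⟨H, hHS, hH⟩ => ?_⟩
    refine ⟨H, hHS, ?_⟩
    rw [hempty T hT H hH]
    exact emptyFail _ a b
  · refine ⟨⟨{a}, by simp⟩, fun T hT => ?_⟩
    rw [hred]
    refine ⟨satPhi a b hab T hT, fun h hh _ => ?_⟩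
    rw [hempty T hT (h T) hh]
    exact emptyFail _ a b


end EASP
end

section
/- Let a, b, c, d be distinct atoms and let Σ be the positive EASP program consisting of the four rules: a ∨ b; c ← b; d ← K a; ⊥ ← K̂ d. Then both S5-models {{a},{b,c}} and {{b,c}} are tfunctional-minimal models of Σ. -/
attribute [local instance] Classical.propDecidable

namespace EASP

/-- The positive program Σ = { a ∨ b ;  c ← b ;  d ← K a ;  ⊥ ← K̂ d }. -/
def Sig (a b c d : ℕ) : Program :=
  [⟨[.obj a, .obj b], []⟩,
   ⟨[.obj c], [.pos (.obj b)]⟩,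
   ⟨[.obj d], [.pos (.k a)]⟩,
   ⟨[], [.pos (.khat d)]⟩]


lemma reduct_sig (a b c d : ℕ) (M : Set Val) (T : Val) :
    reduct M T (Sig a b c d) = Sig a b c d := by
  simp [reduct, Sig, reductB]

lemma refute1 (a b c d : ℕ) (M : Set Val) (H : Val) (ha : a ∉ H) (hb : b ∉ H) :
    ¬ setSatProg M H (Sig a b c d) := by
  intro hsat
  have := hsat ⟨[.obj a, .obj b], []⟩ (by simp [Sig])
  rcases this (by simp) with ⟨l, hl, hsl⟩
  simp only [List.mem_cons, List.mem_singleton, List.not_mem_nil, or_false] at hl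
  rcases hl with rfl | rfl
  · exact ha hsl
  · exact hb hsl

lemma refute2 (a b c d : ℕ) (M : Set Val) (H : Val) (hb : b ∈ H) (hc : c ∉ H) :
    ¬ setSatProg M H (Sig a b c d) := by
  intro hsat
  have := hsat ⟨[.obj c], [.pos (.obj b)]⟩ (by simp [Sig])
  rcases this (by intro x hx; simp only [List.mem_singleton] at hx; subst hx; exact hb)
    with ⟨l, hl, hsl⟩
  simp only [List.mem_singleton] at hl
  subst hl
  exact hc hsl

/-- Refutation for any strict subset of `{b,c}` as point. -/
lemma refuteBC (a b c d : ℕ) (hab : a ≠ b) (hac : a ≠ c)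
    (M : Set Val) (H : Val) (hH : H ⊂ ({b, c} : Val)) :
    ¬ setSatProg M H (Sig a b c d) := by
  have hsub := hH.1
  have ha : a ∉ H := by
    intro h
    rcases hsub h with h' | h' <;> simp_all
  by_cases hb : b ∈ H
  · have hc : c ∉ H := by
      intro hc
      apply hH.2
      intro x hx
      rcases hx with rfl | hx
      · exact hb
      · simp only [Set.mem_singleton_iff] at hx; subst hx; exact hc
    exact refute2 a b c d M H hb hc
  · exact refute1 a b c d M H ha hb

/-- Satisfaction of Σ. -/
lemma satSig (a b c d : ℕ) (M : Set Val) (T : Val)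
    (h1 : a ∈ T ∨ b ∈ T) (h2 : b ∈ T → c ∈ T)
    (h3 : ∃ T' ∈ M, a ∉ T') (hd : ∀ T' ∈ M, d ∉ T') :
    setSatProg M T (Sig a b c d) := by
  intro r hr
  simp only [Sig, List.mem_cons, List.not_mem_nil, or_false] at hr
  rcases hr with rfl | rfl | rfl | rfl
  · intro _
    rcases h1 with ha | hb
    · exact ⟨.obj a, by simp, ha⟩
    · exact ⟨.obj b, by simp, hb⟩
  · intro hbody
    have hb : b ∈ T := hbody (.pos (.obj b)) (by simp)
    exact ⟨.obj c, by simp, h2 hb⟩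
  · intro hbody
    have hk : ∀ T' ∈ M, a ∈ T' := hbody (.pos (.k a)) (by simp)
    rcases h3 with ⟨T', hT', ha⟩
    exact absurd (hk T' hT') ha
  · intro hbody
    have hk : ∃ T' ∈ M, d ∈ T' := hbody (.pos (.khat d)) (by simp)
    rcases hk with ⟨T', hT', hdT⟩
    exact absurd hdT (hd T' hT')

/-- {{a},{b,c}} and {{b,c}} are tfunctional-minimal models of Σ. -/
theorem stmt12 (a b c d : ℕ)
    (hab : a ≠ b) (hac : a ≠ c) (had : a ≠ d)
    (hbc : b ≠ c) (hbd : b ≠ d) (hcd : c ≠ d) :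
    tfunMinimal {({a} : Val), ({b, c} : Val)} (Sig a b c d) ∧
      tfunMinimal {({b, c} : Val)} (Sig a b c d) := by
  have hdA : d ∉ ({a} : Val) := by simp [had.symm]
  have hdBC : d ∉ ({b, c} : Val) := by simp [hbd.symm, hcd.symm]
  have haBC : a ∉ ({b, c} : Val) := by simp [hab, hac]
  have hAneBC : ({a} : Val) ≠ ({b, c} : Val) := by
    intro h
    have : b ∈ ({a} : Val) := h ▸ (by simp : b ∈ ({b, c} : Val))
    exact hab (this.symm)
  constructor
  · refine ⟨⟨{a}, by simp⟩, ?_⟩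
    intro T hT
    rw [reduct_sig]
    simp only [Set.mem_insert_iff, Set.mem_singleton_iff] at hT
    rcases hT with rfl | rfl
    · constructor
      · refine satSig a b c d _ _ (Or.inl (by simp)) ?_ ⟨{b, c}, by simp, haBC⟩ ?_
        · intro hb; exact absurd hb.symm hab
        · intro T' hT'
          rcases hT' with rfl | hT'
          · exact hdA
          · simp only [Set.mem_singleton_iff] at hT'; subst hT'; exact hdBC
      · intro h hsub _ hsat
        have hE : h {a} = ∅ := Set.ssubset_singleton_iff.mp hsub
        refine refute1 a b c d _ (h {a}) ?_ ?_ hsat <;> simp [hE]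
    · constructor
      · refine satSig a b c d _ _ (Or.inr (by simp)) (fun _ => by simp)
          ⟨{b, c}, by simp, haBC⟩ ?_
        intro T' hT'
        rcases hT' with rfl | hT'
        · exact hdA
        · simp only [Set.mem_singleton_iff] at hT'; subst hT'; exact hdBC
      · intro h hsub _ hsat
        exact refuteBC a b c d hab hac _ (h {b, c}) hsub hsat
  · refine ⟨⟨{b, c}, by simp⟩, ?_⟩
    intro T hT
    rw [reduct_sig]
    simp only [Set.mem_singleton_iff] at hT
    subst hT
    constructor
    · refine satSig a b c d _ _ (Or.inr (by simp)) (fun _ => by simp)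
        ⟨{b, c}, by simp, haBC⟩ ?_
      intro T' hT'
      simp only [Set.mem_singleton_iff] at hT'; subst hT'; exact hdBC
    · intro h hsub _ hsat
      exact refuteBC a b c d hab hac _ (h {b, c}) hsub hsat

end EASP
end

section
/- Let a, b, c, d be distinct atoms and let Γ be the EASP program consisting of the four rules: a ∨ b; c ← K̂ a ∧ not b; d ← not (K a) ∧ b; ⊥ ← not (K̂ c). Then both S5-models {{a,c},{b,d}} and {{a,c}} are tfunctional-minimal models of Γ. -/
attribute [local instance] Classical.propDecidable

namespace EASP

/-- The program Γ = { a ∨ b ;  c ← K̂ a ∧ not b ;  d ← not (K a) ∧ b ;  ⊥ ← not (K̂ c) }. -/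
def Gam (a b c d : ℕ) : Program :=
  [⟨[.obj a, .obj b], []⟩,
   ⟨[.obj c], [.pos (.khat a), .neg (.obj b)]⟩,
   ⟨[.obj d], [.neg (.k a), .pos (.obj b)]⟩,
   ⟨[], [.neg (.khat c)]⟩]

/-- {{a,c},{b,d}} and {{a,c}} are tfunctional-minimal models of Γ. -/
theorem stmt13 (a b c d : ℕ)
    (hab : a ≠ b) (hac : a ≠ c) (had : a ≠ d)
    (hbc : b ≠ c) (hbd : b ≠ d) (hcd : c ≠ d) :
    tfunMinimal {({a, c} : Val), ({b, d} : Val)} (Gam a b c d) ∧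
      tfunMinimal {({a, c} : Val)} (Gam a b c d) := by
  classical
  have hba : b ≠ a := hab.symm
  have hca : c ≠ a := hac.symm
  have hda : d ≠ a := had.symm
  have hcb : c ≠ b := hbc.symm
  have hdb : d ≠ b := hbd.symm
  have hdc : d ≠ c := hcd.symm
  set A : Val := {a, c} with hA
  set B : Val := {b, d} with hB
  have maA : a ∈ A := by simp [hA]
  have mcA : c ∈ A := by simp [hA]
  have mbB : b ∈ B := by simp [hB]
  have mdB : d ∈ B := by simp [hB]
  have hbA : b ∉ A := by simp [hA, hba, hbc]
  have haB : a ∉ B := by simp [hB, hab, had]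
  have hdA : d ∉ A := by simp [hA, hda, hdc]
  have hcB : c ∉ B := by simp [hB, hcb, hcd]
  have hAB : A ≠ B := fun e => haB (e ▸ maA)
  have hBA : B ≠ A := fun e => hbA (e ▸ mbB)
  refine ⟨⟨⟨A, by simp⟩, ?_⟩, ⟨⟨A, by simp⟩, ?_⟩⟩
  · rintro T (rfl | rfl)
    · constructor
      · simp [reduct, Gam, reductB, setSatProg, setSatRule, setSatB, setSatLit, maA, mcA, hbA, haB]
      · intro h hsub hfix hsat
        have hhB : h B = B := hfix B (by simp) hBA
        have hbhA : b ∉ h A := fun m => hbA (hsub.subset m)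
        have hred : reduct {A, B} A (Gam a b c d)
            = [⟨[.obj a, .obj b], []⟩, ⟨[.obj c], [.pos (.khat a), .top]⟩,
               ⟨[.obj d], [.top, .pos (.obj b)]⟩, ⟨[], [.bot]⟩] := by
          simp [reduct, Gam, reductB, setSatLit, hbA, haB, mcA]
        rw [hred] at hsat
        have h1 := hsat ⟨[.obj a, .obj b], []⟩ (by simp)
        simp [setSatRule, setSatB, setSatLit, hbhA] at h1
        have h2 := hsat ⟨[.obj c], [.pos (.khat a), .top]⟩ (by simp)
        simp [setSatRule, setSatB, setSatLit, Set.image_insert_eq, hhB] at h2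
        have hc : c ∈ h A := h2 (Or.inl h1)
        refine hsub.ne (Set.Subset.antisymm hsub.subset fun x hx => ?_)
        simp only [hA, Set.mem_insert_iff, Set.mem_singleton_iff] at hx
        rcases hx with rfl | rfl
        · exact h1
        · exact hc
    · constructor
      · simp [reduct, Gam, reductB, setSatProg, setSatRule, setSatB, setSatLit, mbB, mdB, haB, mcA]
      · intro h hsub hfix hsat
        have hhA : h A = A := hfix A (by simp) hAB
        have hahB : a ∉ h B := fun m => haB (hsub.subset m)
        have hred : reduct {A, B} B (Gam a b c d)
            = [⟨[.obj a, .obj b], []⟩, ⟨[.obj c], [.pos (.khat a), .bot]⟩,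
               ⟨[.obj d], [.top, .pos (.obj b)]⟩, ⟨[], [.bot]⟩] := by
          simp [reduct, Gam, reductB, setSatLit, mbB, haB, mcA]
        rw [hred] at hsat
        have h1 := hsat ⟨[.obj a, .obj b], []⟩ (by simp)
        simp [setSatRule, setSatB, setSatLit, hahB] at h1
        have h3 := hsat ⟨[.obj d], [.top, .pos (.obj b)]⟩ (by simp)
        simp [setSatRule, setSatB, setSatLit, h1] at h3
        refine hsub.ne (Set.Subset.antisymm hsub.subset fun x hx => ?_)
        simp only [hB, Set.mem_insert_iff, Set.mem_singleton_iff] at hx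
        rcases hx with rfl | rfl
        · exact h1
        · exact h3
  · rintro T rfl
    constructor
    · simp [reduct, Gam, reductB, setSatProg, setSatRule, setSatB, setSatLit, maA, mcA, hbA]
    · intro h hsub hfix hsat
      have hbhA : b ∉ h A := fun m => hbA (hsub.subset m)
      have hred : reduct {A} A (Gam a b c d)
          = [⟨[.obj a, .obj b], []⟩, ⟨[.obj c], [.pos (.khat a), .top]⟩,
             ⟨[.obj d], [.bot, .pos (.obj b)]⟩, ⟨[], [.bot]⟩] := by
        simp [reduct, Gam, reductB, setSatLit, hbA, maA, mcA]
      rw [hred] at hsat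
      have h1 := hsat ⟨[.obj a, .obj b], []⟩ (by simp)
      simp [setSatRule, setSatB, setSatLit, hbhA] at h1
      have h2 := hsat ⟨[.obj c], [.pos (.khat a), .top]⟩ (by simp)
      simp [setSatRule, setSatB, setSatLit, h1] at h2
      refine hsub.ne (Set.Subset.antisymm hsub.subset fun x hx => ?_)
      simp only [hA, Set.mem_insert_iff, Set.mem_singleton_iff] at hx
      rcases hx with rfl | rfl
      · exact h1
      · exact h2
end EASP
end

section
/- Let p be an atom and let Π be the program consisting of the single rule p ← K p. Then the S5-model {{p}} is an ES94 world-view of Π, but {{p}} is not a tfunctional-minimal model of Π (viewed as an EASP program). -/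
attribute [local instance] Classical.propDecidable

namespace EASP

/-- Atoms of non-epistemic programs: atoms and the constants ⊤/⊥. -/
inductive NAt : Type where
  | atom : ℕ → NAt
  | top : NAt
  | bot : NAt

/-- Body conjuncts of non-epistemic programs: `a` or `not a`. -/
inductive NB : Type where
  | pos : NAt → NB
  | neg : NAt → NB

/-- A non-epistemic rule. -/
structure NRule : Type where
  head : List ℕ
  body : List NB

abbrev NProgram := List NRule

def natSat (T : Val) : NAt → Prop
  | .atom p => p ∈ T
  | .top => True
  | .bot => False

def nbSat (T : Val) : NB → Prop
  | .pos a => natSat T a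
  | .neg a => ¬ natSat T a

def nruleSat (T : Val) (r : NRule) : Prop :=
  (∀ b ∈ r.body, nbSat T b) → ∃ p ∈ r.head, p ∈ T

/-- Classical satisfaction of a non-epistemic program by a valuation. -/
def nprogSat (T : Val) (P : NProgram) : Prop := ∀ r ∈ P, nruleSat T r

/-- ASP reduct of a body conjunct: `not a` becomes ⊤ if `T ⊭ a`, ⊥ otherwise. -/
noncomputable def aspReductB (T : Val) : NB → NB
  | .pos a => .pos a
  | .neg a => if natSat T a then .pos .bot else .pos .top

/-- The ASP reduct `P^T` of a non-epistemic program. -/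
noncomputable def aspReduct (T : Val) (P : NProgram) : NProgram :=
  P.map (fun r => ⟨r.head, r.body.map (aspReductB T)⟩)

/-- `T` is a stable model of `P`: `T ⊨ P^T` and no `H ⊊ T` satisfies `P^T`. -/
def stable (P : NProgram) (T : Val) : Prop :=
  nprogSat T (aspReduct T P) ∧ ∀ H, H ⊂ T → ¬ nprogSat H (aspReduct T P)

/-- `AS P`: the set of stable models of `P`. -/
def AS (P : NProgram) : Set Val := {T | stable P T}

/-- Atoms of ES-programs: atoms and the subjective literals `K p`, `M p`. -/
inductive EAt : Type where
  | atom : ℕ → EAt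
  | k : ℕ → EAt
  | m : ℕ → EAt

/-- Body conjuncts of ES-rules: `a` or `not a`. -/
inductive EB : Type where
  | pos : EAt → EB
  | neg : EAt → EB

/-- An ES-rule: head is a disjunction of atoms. -/
structure ERule : Type where
  head : List ℕ
  body : List EB

abbrev EProgram := List ERule

/-- ES94 epistemic reduct on atoms: `K p` becomes ⊤ if `p` holds in every world of `M`
and ⊥ otherwise; `M p` becomes ⊤ if `p` holds in some world of `M` and ⊥ otherwise. -/
noncomputable def epAt (M : Set Val) : EAt → NAt
  | .atom p => .atom p
  | .k p => if ∀ T ∈ M, p ∈ T then .top else .bot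
  | .m p => if ∃ T ∈ M, p ∈ T then .top else .bot

noncomputable def epB (M : Set Val) : EB → NB
  | .pos a => .pos (epAt M a)
  | .neg a => .neg (epAt M a)

/-- The ES94 epistemic reduct `Π^M` of an ES-program. -/
noncomputable def epReduct (M : Set Val) (P : EProgram) : NProgram :=
  P.map (fun r => ⟨r.head, r.body.map (epB M)⟩)

/-- `M` is an ES94 world-view of `P` iff `M` is nonempty and `M = AS (P^M)`. -/
def worldView (P : EProgram) (M : Set Val) : Prop :=
  M.Nonempty ∧ M = AS (epReduct M P)

/-- {{p}} is an ES94 world-view of { p ← K p } but not a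
tfunctional-minimal model of it (viewed as an EASP program). -/
theorem stmt16 (p : ℕ) :
    worldView [⟨[p], [.pos (.k p)]⟩] {({p} : Val)} ∧
      ¬ tfunMinimal {({p} : Val)} ([⟨[.obj p], [.pos (.k p)]⟩] : Program) := by
  have hred : epReduct {({p} : Val)} [⟨[p], [.pos (.k p)]⟩] = [⟨[p], [.pos .top]⟩] := by
    simp [epReduct, epB, epAt]
  constructor
  · refine ⟨⟨{p}, rfl⟩, ?_⟩
    rw [hred]
    ext T
    have hasp : ∀ T' : Val, aspReduct T' [(⟨[p], [.pos .top]⟩ : NRule)] = [⟨[p], [.pos .top]⟩] := by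
      intro T'; simp [aspReduct, aspReductB]
    have hsat : ∀ T' H : Val, nprogSat H (aspReduct T' [(⟨[p], [.pos .top]⟩ : NRule)]) ↔ p ∈ H := by
      intro T' H
      rw [hasp]
      constructor
      · intro h
        have := h ⟨[p], [.pos .top]⟩ (by simp)
        rcases this (by intro b hb; simp at hb; subst hb; exact trivial) with ⟨q, hq, hq2⟩
        simp at hq; subst hq; exact hq2
      · intro hp r hr
        simp at hr; subst hr
        intro _; exact ⟨p, by simp, hp⟩
    constructor
    · intro hT
      simp only [Set.mem_singleton_iff] at hT; subst hT
      refine ⟨(hsat _ _).2 rfl, ?_⟩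
      intro H hH hs
      have hp : p ∈ H := (hsat _ _).1 hs
      exact hH.2 (Set.singleton_subset_iff.2 hp)
    · rintro ⟨h1, h2⟩
      have hp : p ∈ T := (hsat _ _).1 h1
      simp only [Set.mem_singleton_iff]
      by_contra hne
      have hsub : ({p} : Val) ⊂ T :=
        ⟨Set.singleton_subset_iff.2 hp, fun hc => hne (le_antisymm hc (Set.singleton_subset_iff.2 hp))⟩
      exact h2 {p} hsub ((hsat _ _).2 rfl)
  · rintro ⟨-, hmin⟩
    have := hmin {p} rfl
    have hred2 : reduct {({p} : Val)} {p} [(⟨[.obj p], [.pos (.k p)]⟩ : Rule)]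
        = [⟨[.obj p], [.pos (.k p)]⟩] := by
      simp [reduct, reductB]
    rw [hred2] at this
    obtain ⟨-, h2⟩ := this
    refine h2 (fun _ => (∅ : Val)) ⟨Set.empty_subset _, fun hc => by simpa using hc rfl⟩
      (by intro T' hT' hne; exact absurd hT' hne) ?_
    intro r hr
    simp at hr; subst hr
    intro hb
    exfalso
    have := hb (.pos (.k p)) (by simp)
    simp only [setSatB, setSatLit] at this
    rcases this (∅ : Val) ⟨{p}, rfl, rfl⟩ with h
    exact h

end EASP
end
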